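/- Let l0,l1 ∈ ℝ and s0,s1 > 0 with (l0,s0) ≠ (l1,s1), and for θ ∈ (0,1) set m_θ(x) = (1−θ)·p_{l0,s0}(x) + θ·p_{l1,s1}(x). Then the Shannon negentropy F(θ) = ∫_ℝ m_θ(x)·log m_θ(x) dx is a strictly convex function of θ on (0,1). -/

import Mathlib

open MeasureTheory Real

/-- The Cauchy density with location `l` and scale `s`. -/
noncomputable def cauchyPdf (l s x : ℝ) : ℝ := s / (π * (s ^ 2 + (x - l) ^ 2))

lemma cauchyPdf_pos {l s : ℝ} (hs : 0 < s) (x : ℝ) : 0 < cauchyPdf l s x := by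
  unfold cauchyPdf; positivity

lemma cauchyPdf_continuous {l s : ℝ} (hs : 0 < s) : Continuous (cauchyPdf l s) := by
  apply continuous_const.div (by continuity)
  intro x; positivity

/-- Upper bound on the Cauchy density with a single global constant. -/
lemma cauchyPdf_le {l s : ℝ} (hs : 0 < s) (x : ℝ) :
    cauchyPdf l s x ≤ s * (1 + 2 * l ^ 2 + 2 * s ^ 2) / (π * s ^ 2) * (1 + x ^ 2)⁻¹ := by
  have hA : (0:ℝ) < s ^ 2 + (x - l) ^ 2 := by positivity
  have key : s ^ 2 * (1 + x ^ 2) ≤ (1 + 2 * l ^ 2 + 2 * s ^ 2) * (s ^ 2 + (x - l) ^ 2) := by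
    nlinarith [sq_nonneg (x - l), sq_nonneg (l * (x - l)), sq_nonneg (s ^ 2),
      sq_nonneg (s * (x - 2 * l))]
  have hπ := pi_pos
  rw [cauchyPdf, ← div_eq_mul_inv, div_div,
    div_le_div_iff₀ (by positivity) (by positivity)]
  have h2 := mul_le_mul_of_nonneg_left key (le_of_lt (mul_pos hπ hs))
  nlinarith [h2]

lemma inv_one_add_sq_le (x : ℝ) :
    ((1 + x ^ 2)⁻¹) ^ ((3:ℝ)/4) ≤ (2:ℝ) ^ ((3:ℝ)/4) * (1 + ‖x‖) ^ (-(3/2) : ℝ) := by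
  have h1 : (0:ℝ) < 1 + x ^ 2 := by positivity
  have h2 : (0:ℝ) < 1 + ‖x‖ := by positivity
  have key : (1 + ‖x‖) ^ 2 ≤ 2 * (1 + x ^ 2) := by
    have : ‖x‖ ^ 2 = x ^ 2 := by rw [Real.norm_eq_abs, sq_abs]
    nlinarith [sq_nonneg (1 - ‖x‖)]
  have h3 : (2 * (1 + x ^ 2)) ^ (-(3/4) : ℝ) ≤ ((1 + ‖x‖) ^ 2) ^ (-(3/4) : ℝ) :=
    Real.rpow_le_rpow_of_nonpos (by positivity) key (by norm_num)
  have h4 : ((1 + ‖x‖) ^ 2) ^ (-(3/4) : ℝ) = (1 + ‖x‖) ^ (-(3/2) : ℝ) := by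
    rw [← Real.rpow_natCast_mul h2.le 2 (-(3/4))]
    norm_num
  have h5 : (2 * (1 + x ^ 2)) ^ (-(3/4) : ℝ)
      = (2:ℝ) ^ (-(3/4) : ℝ) * (1 + x ^ 2) ^ (-(3/4) : ℝ) :=
    Real.mul_rpow (by norm_num) h1.le
  have h6 : ((1 + x ^ 2)⁻¹) ^ ((3:ℝ)/4) = (1 + x ^ 2) ^ (-(3/4) : ℝ) := by
    rw [Real.inv_rpow h1.le, ← Real.rpow_neg h1.le]
  have h7 : (0:ℝ) < (2:ℝ) ^ ((3:ℝ)/4) := Real.rpow_pos_of_pos (by norm_num) _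
  have h8 : (2:ℝ) ^ ((3:ℝ)/4) * (2:ℝ) ^ (-(3/4) : ℝ) = 1 := by
    rw [← Real.rpow_add (by norm_num)]; norm_num
  calc ((1 + x ^ 2)⁻¹) ^ ((3:ℝ)/4)
      = (2:ℝ) ^ ((3:ℝ)/4) * ((2:ℝ) ^ (-(3/4) : ℝ) * (1 + x ^ 2) ^ (-(3/4) : ℝ)) := by
        rw [h6, ← mul_assoc, h8, one_mul]
    _ = (2:ℝ) ^ ((3:ℝ)/4) * (2 * (1 + x ^ 2)) ^ (-(3/4) : ℝ) := by rw [h5]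
    _ ≤ (2:ℝ) ^ ((3:ℝ)/4) * ((1 + ‖x‖) ^ 2) ^ (-(3/4) : ℝ) := by
        exact mul_le_mul_of_nonneg_left h3 h7.le
    _ = (2:ℝ) ^ ((3:ℝ)/4) * (1 + ‖x‖) ^ (-(3/2) : ℝ) := by rw [h4]

lemma integrable_pow34 : Integrable (fun x : ℝ => ((1 + x ^ 2)⁻¹) ^ ((3:ℝ)/4)) := by
  have hint : Integrable (fun x : ℝ => (1 + ‖x‖) ^ (-(3/2) : ℝ)) := by
    have := integrable_one_add_norm (E := ℝ) (μ := volume) (r := 3/2)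
      (by norm_num [Module.finrank_self])
    simpa using this
  refine (hint.const_mul ((2:ℝ) ^ ((3:ℝ)/4))).mono' ?_ ?_
  · refine Continuous.aestronglyMeasurable ?_
    refine Continuous.rpow_const ?_ (fun x => Or.inl (by positivity))
    exact (continuous_const.add (continuous_pow 2)).inv₀ (fun x => by
      have hx1 : (0:ℝ) < 1 + x ^ 2 := by positivity
      exact hx1.ne')
  · filter_upwards with x
    rw [Real.norm_eq_abs, abs_of_nonneg (by positivity)]
    exact inv_one_add_sq_le x

/-- Elementary bound `|t log t| ≤ 4 t^{3/4} + t²` for `t ≥ 0`. -/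
lemma abs_mul_log_le {t : ℝ} (ht : 0 ≤ t) :
    |t * Real.log t| ≤ 4 * t ^ ((3:ℝ)/4) + t ^ 2 := by
  rcases eq_or_lt_of_le ht with h | h
  · simp [← h]
  rcases le_total t 1 with h1 | h1
  · have hlog : Real.log t ≤ 0 := Real.log_nonpos ht h1
    rw [abs_of_nonpos (mul_nonpos_of_nonneg_of_nonpos ht hlog)]
    have h2 : Real.log (t ^ (-(1/4) : ℝ)) ≤ t ^ (-(1/4) : ℝ) - 1 :=
      Real.log_le_sub_one_of_pos (Real.rpow_pos_of_pos h _)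
    rw [Real.log_rpow h] at h2
    have h3 : (0:ℝ) < t ^ (-(1/4) : ℝ) := Real.rpow_pos_of_pos h _
    have key : -Real.log t ≤ 4 * t ^ (-(1/4) : ℝ) := by linarith
    have h4 : t * (4 * t ^ (-(1/4) : ℝ)) = 4 * t ^ ((3:ℝ)/4) := by
      have he : ((3:ℝ)/4) = 1 + (-(1/4) : ℝ) := by norm_num
      rw [he, Real.rpow_add h, Real.rpow_one]; ring
    have h5 := mul_le_mul_of_nonneg_left key ht
    rw [h4] at h5
    nlinarith [sq_nonneg t]
  · have hlog : 0 ≤ Real.log t := Real.log_nonneg h1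
    rw [abs_of_nonneg (mul_nonneg ht hlog)]
    have h2 : Real.log t ≤ t - 1 := Real.log_le_sub_one_of_pos h
    have h3 := mul_le_mul_of_nonneg_left h2 ht
    have h4 : (0:ℝ) ≤ t ^ ((3:ℝ)/4) := Real.rpow_nonneg ht _
    nlinarith

lemma mix_pos {l0 l1 s0 s1 : ℝ} (hs0 : 0 < s0) (hs1 : 0 < s1) {θ : ℝ}
    (hθ0 : 0 ≤ θ) (hθ1 : θ ≤ 1) (x : ℝ) :
    0 < (1 - θ) * cauchyPdf l0 s0 x + θ * cauchyPdf l1 s1 x := by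
  have h0 := cauchyPdf_pos (l := l0) hs0 x
  have h1 := cauchyPdf_pos (l := l1) hs1 x
  rcases le_total (cauchyPdf l0 s0 x) (cauchyPdf l1 s1 x) with h | h
  · nlinarith [mul_nonneg hθ0 (sub_nonneg.2 h)]
  · nlinarith [mul_nonneg (sub_nonneg.2 hθ1) (sub_nonneg.2 h)]

lemma mix_continuous {l0 l1 s0 s1 : ℝ} (hs0 : 0 < s0) (hs1 : 0 < s1) (θ : ℝ) :
    Continuous (fun x => (1 - θ) * cauchyPdf l0 s0 x + θ * cauchyPdf l1 s1 x) :=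
  ((continuous_const.mul (cauchyPdf_continuous hs0)).add
    (continuous_const.mul (cauchyPdf_continuous hs1)))

/-- Integrability of the mixture negentropy integrand. -/
lemma integrable_mix_mul_log (l0 l1 s0 s1 : ℝ) (hs0 : 0 < s0) (hs1 : 0 < s1) {θ : ℝ}
    (hθ0 : 0 ≤ θ) (hθ1 : θ ≤ 1) :
    Integrable (fun x => ((1 - θ) * cauchyPdf l0 s0 x + θ * cauchyPdf l1 s1 x) *
      Real.log ((1 - θ) * cauchyPdf l0 s0 x + θ * cauchyPdf l1 s1 x)) := by
  set K : ℝ := s0 * (1 + 2 * l0 ^ 2 + 2 * s0 ^ 2) / (π * s0 ^ 2)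
    + s1 * (1 + 2 * l1 ^ 2 + 2 * s1 ^ 2) / (π * s1 ^ 2) with hK
  have hπ := pi_pos
  have hKpos : 0 < K := by rw [hK]; positivity
  have hbound : ∀ x : ℝ, (1 - θ) * cauchyPdf l0 s0 x + θ * cauchyPdf l1 s1 x
      ≤ K * (1 + x ^ 2)⁻¹ := by
    intro x
    have hb0 := cauchyPdf_le (l := l0) hs0 x
    have hb1 := cauchyPdf_le (l := l1) hs1 x
    have h0 := (cauchyPdf_pos (l := l0) hs0 x).le
    have h1 := (cauchyPdf_pos (l := l1) hs1 x).le
    have e0 : (1 - θ) * cauchyPdf l0 s0 x ≤ cauchyPdf l0 s0 x :=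
      mul_le_of_le_one_left h0 (by linarith)
    have e1 : θ * cauchyPdf l1 s1 x ≤ cauchyPdf l1 s1 x :=
      mul_le_of_le_one_left h1 hθ1
    rw [hK, add_mul]
    linarith
  have hmpos : ∀ x : ℝ, 0 < (1 - θ) * cauchyPdf l0 s0 x + θ * cauchyPdf l1 s1 x :=
    mix_pos hs0 hs1 hθ0 hθ1
  have hcont := mix_continuous (l0 := l0) (l1 := l1) hs0 hs1 θ
  refine Integrable.mono'
    (g := fun x => 4 * (K ^ ((3:ℝ)/4) * ((1 + x ^ 2)⁻¹) ^ ((3:ℝ)/4)) + K ^ 2 * (1 + x ^ 2)⁻¹)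
    (((integrable_pow34.const_mul _).const_mul 4).add
      (integrable_inv_one_add_sq.const_mul _)) ?_ ?_
  · exact (hcont.mul (hcont.log (fun x => (hmpos x).ne'))).aestronglyMeasurable
  · filter_upwards with x
    rw [Real.norm_eq_abs]
    set mθ := (1 - θ) * cauchyPdf l0 s0 x + θ * cauchyPdf l1 s1 x with hmθ
    have hinv : (0:ℝ) < (1 + x ^ 2)⁻¹ := by positivity
    have hinv1 : (1 + x ^ 2)⁻¹ ≤ 1 := by
      rw [inv_le_one_iff₀]; right; nlinarith [sq_nonneg x]
    have h1 : |mθ * Real.log mθ| ≤ 4 * mθ ^ ((3:ℝ)/4) + mθ ^ 2 :=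
      abs_mul_log_le (hmpos x).le
    have h2 : mθ ^ ((3:ℝ)/4) ≤ K ^ ((3:ℝ)/4) * ((1 + x ^ 2)⁻¹) ^ ((3:ℝ)/4) := by
      rw [← Real.mul_rpow hKpos.le hinv.le]
      exact Real.rpow_le_rpow (hmpos x).le (hbound x) (by norm_num)
    have h3 : mθ ^ 2 ≤ K ^ 2 * (1 + x ^ 2)⁻¹ := by
      have := pow_le_pow_left₀ (hmpos x).le (hbound x) 2
      rw [mul_pow] at this
      have h4 : ((1 + x ^ 2)⁻¹) ^ 2 ≤ (1 + x ^ 2)⁻¹ := by nlinarith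
      nlinarith [sq_nonneg K]
    linarith

open Polynomial in
/-- Two distinct Cauchy densities agree at only finitely many points. -/
lemma finite_eq_set (l0 l1 s0 s1 : ℝ) (hs0 : 0 < s0) (hs1 : 0 < s1)
    (hne : (l0, s0) ≠ (l1, s1)) :
    {x : ℝ | cauchyPdf l0 s0 x = cauchyPdf l1 s1 x}.Finite := by
  simp only [ne_eq, Prod.mk.injEq, not_and] at hne
  have hP : (C (s0 - s1) * X ^ 2 + C (2 * (s1 * l0 - s0 * l1)) * X
      + C (s0 * s1 ^ 2 + s0 * l1 ^ 2 - s1 * s0 ^ 2 - s1 * l0 ^ 2) : ℝ[X]) ≠ 0 := by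
    intro h
    have e0 := congrArg (fun p : ℝ[X] => eval 0 p) h
    have e1 := congrArg (fun p : ℝ[X] => eval 1 p) h
    have em := congrArg (fun p : ℝ[X] => eval (-1) p) h
    simp only [eval_add, eval_mul, eval_pow, eval_C, eval_X, eval_zero] at e0 e1 em
    norm_num at e0 e1 em
    have hA : s0 - s1 = 0 := by linarith
    have hB : 2 * (s1 * l0 - s0 * l1) = 0 := by linarith
    have hs : s0 = s1 := by linarith
    have hl : s1 * (l0 - l1) = 0 := by rw [hs] at hB; linarith
    rcases mul_eq_zero.1 hl with h' | h'
    · exact hs1.ne' h'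
    · exact hne (by linarith) hs
  refine (finite_setOf_isRoot hP).subset ?_
  intro x hx
  simp only [Set.mem_setOf_eq] at hx
  have h0 : (0:ℝ) < π * (s0 ^ 2 + (x - l0) ^ 2) := by positivity
  have h1 : (0:ℝ) < π * (s1 ^ 2 + (x - l1) ^ 2) := by positivity
  rw [cauchyPdf, cauchyPdf, div_eq_div_iff h0.ne' h1.ne'] at hx
  have hx'' : π * (s0 * (s1 ^ 2 + (x - l1) ^ 2)) = π * (s1 * (s0 ^ 2 + (x - l0) ^ 2)) := by
    linear_combination hx
  have hx' := mul_left_cancel₀ pi_ne_zero hx''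
  simp only [Set.mem_setOf_eq, IsRoot.def, eval_add, eval_mul, eval_pow, eval_C, eval_X]
  linear_combination hx'

/-- The Shannon negentropy of the mixture of two distinct Cauchy densities is a
strictly convex function of the mixing parameter on `(0,1)`. -/
theorem negentropy_strictConvexOn (l0 l1 s0 s1 : ℝ) (hs0 : 0 < s0) (hs1 : 0 < s1)
    (hne : (l0, s0) ≠ (l1, s1)) :
    StrictConvexOn ℝ (Set.Ioo (0 : ℝ) 1)
      (fun θ : ℝ =>
        ∫ x : ℝ, ((1 - θ) * cauchyPdf l0 s0 x + θ * cauchyPdf l1 s1 x) *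
          Real.log ((1 - θ) * cauchyPdf l0 s0 x + θ * cauchyPdf l1 s1 x)) := by
  constructor
  · exact convex_Ioo 0 1
  intro θ1 hθ1 θ2 hθ2 hθne a b ha hb hab
  simp only [smul_eq_mul]
  set θ3 := a * θ1 + b * θ2 with hθ3
  have hθ3mem : θ3 ∈ Set.Ioo (0:ℝ) 1 := by
    have := (convex_Ioo (0:ℝ) 1) hθ1 hθ2 ha.le hb.le hab
    simpa [smul_eq_mul] using this
  -- abbreviations
  set m : ℝ → ℝ → ℝ :=
    fun θ x => (1 - θ) * cauchyPdf l0 s0 x + θ * cauchyPdf l1 s1 x with hm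
  set f : ℝ → ℝ → ℝ := fun θ x => m θ x * Real.log (m θ x) with hf
  have hmpos : ∀ θ ∈ Set.Icc (0:ℝ) 1, ∀ x, 0 < m θ x := by
    intro θ hθ x
    exact mix_pos hs0 hs1 hθ.1 hθ.2 x
  have hIcc : ∀ θ ∈ Set.Ioo (0:ℝ) 1, θ ∈ Set.Icc (0:ℝ) 1 :=
    fun θ hθ => ⟨hθ.1.le, hθ.2.le⟩
  have hint : ∀ θ ∈ Set.Icc (0:ℝ) 1, Integrable (f θ) := by
    intro θ hθ
    exact integrable_mix_mul_log l0 l1 s0 s1 hs0 hs1 hθ.1 hθ.2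
  have hint1 := hint θ1 (hIcc θ1 hθ1)
  have hint2 := hint θ2 (hIcc θ2 hθ2)
  have hint3 := hint θ3 (hIcc θ3 hθ3mem)
  -- the mixture is affine in θ
  have hmlin : ∀ x, m θ3 x = a * m θ1 x + b * m θ2 x := by
    intro x
    simp only [hm, hθ3]
    rw [show b = 1 - a by linarith]
    ring
  -- pointwise convexity gap
  have hgnn : ∀ x, 0 ≤ a * f θ1 x + b * f θ2 x - f θ3 x := by
    intro x
    have hc := Real.convexOn_mul_log.2 (Set.mem_Ici.2 (hmpos θ1 (hIcc θ1 hθ1) x).le)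
      (Set.mem_Ici.2 (hmpos θ2 (hIcc θ2 hθ2) x).le) ha.le hb.le hab
    simp only [smul_eq_mul] at hc
    have := hmlin x
    simp only [hf]
    rw [this]
    linarith
  have hgpos : ∀ x, cauchyPdf l0 s0 x ≠ cauchyPdf l1 s1 x →
      0 < a * f θ1 x + b * f θ2 x - f θ3 x := by
    intro x hpx
    have hmne : m θ1 x ≠ m θ2 x := by
      intro h
      apply hpx
      have : (θ1 - θ2) * (cauchyPdf l1 s1 x - cauchyPdf l0 s0 x) = 0 := by
        simp only [hm] at h
        linear_combination h
      rcases mul_eq_zero.1 this with h' | h'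
      · exact absurd (by linarith [sub_eq_zero.1 h']) hθne
      · linarith [sub_eq_zero.1 h']
    have hc := Real.strictConvexOn_mul_log.2 (Set.mem_Ici.2 (hmpos θ1 (hIcc θ1 hθ1) x).le)
      (Set.mem_Ici.2 (hmpos θ2 (hIcc θ2 hθ2) x).le) hmne ha hb hab
    simp only [smul_eq_mul] at hc
    have := hmlin x
    simp only [hf]
    rw [this]
    linarith
  -- integrability of the gap
  have hintg : Integrable (fun x => a * f θ1 x + b * f θ2 x - f θ3 x) :=
    ((hint1.const_mul a).add (hint2.const_mul b)).sub hint3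
  -- the gap has positive integral
  have key : 0 < ∫ x : ℝ, (a * f θ1 x + b * f θ2 x - f θ3 x) := by
    rw [integral_pos_iff_support_of_nonneg hgnn hintg]
    have hSfin := finite_eq_set l0 l1 s0 s1 hs0 hs1 hne
    have hS0 : volume {x : ℝ | cauchyPdf l0 s0 x = cauchyPdf l1 s1 x} = 0 :=
      hSfin.measure_zero _
    have hsub : {x : ℝ | cauchyPdf l0 s0 x = cauchyPdf l1 s1 x}ᶜ ⊆
        Function.support (fun x => a * f θ1 x + b * f θ2 x - f θ3 x) := by
      intro x hx
      exact (hgpos x hx).ne'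
    have hcompl : volume {x : ℝ | cauchyPdf l0 s0 x = cauchyPdf l1 s1 x}ᶜ ≠ 0 := by
      intro h
      have hle := measure_union_le (μ := volume)
        {x : ℝ | cauchyPdf l0 s0 x = cauchyPdf l1 s1 x}
        {x : ℝ | cauchyPdf l0 s0 x = cauchyPdf l1 s1 x}ᶜ
      rw [Set.union_compl_self, Real.volume_univ, hS0, h] at hle
      simp at hle
    calc (0:ENNReal) < volume {x : ℝ | cauchyPdf l0 s0 x = cauchyPdf l1 s1 x}ᶜ :=
          pos_iff_ne_zero.2 hcompl
      _ ≤ volume (Function.support (fun x => a * f θ1 x + b * f θ2 x - f θ3 x)) :=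
          measure_mono hsub
  have hsplit : ∫ x : ℝ, (a * f θ1 x + b * f θ2 x - f θ3 x)
      = a * (∫ x : ℝ, f θ1 x) + b * (∫ x : ℝ, f θ2 x) - ∫ x : ℝ, f θ3 x := by
    have h12 : Integrable (fun x => a * f θ1 x + b * f θ2 x) :=
      (hint1.const_mul a).add (hint2.const_mul b)
    rw [integral_sub h12 hint3,
      integral_add (hint1.const_mul a) (hint2.const_mul b),
      integral_const_mul, integral_const_mul]
  rw [hsplit] at key
  show (∫ x : ℝ, f θ3 x) < a * (∫ x : ℝ, f θ1 x) + b * (∫ x : ℝ, f θ2 x)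
  linarith
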